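/- Let X be uniformly distributed on the open unit disc and r ∈ [1/2, 1]. Then the distribution function F_r(x) = P(log|r - X| ≤ x) satisfies F_r(x) = e^{2x} for x ≤ log(1-r), F_r(x) = 1 for x ≥ log 2, and F_r is Lipschitz on ℝ with Lipschitz constant at most 4π. -/

import Mathlib

open Real Complex MeasureTheory Metric

/-- The uniform probability measure on the open unit disc in `ℂ`. -/
noncomputable def unifDisc : Measure ℂ :=
  (volume (Metric.ball (0 : ℂ) 1))⁻¹ • volume.restrict (Metric.ball (0 : ℂ) 1)

private lemma vol_ballC : volume (Metric.ball (0 : ℂ) 1) = ENNReal.ofReal π := by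
  rw [Complex.volume_ball, ← NNReal.coe_real_pi, ENNReal.ofReal_coe_nnreal]
  simp

private lemma unif_apply (r x : ℝ) :
    unifDisc {z : ℂ | Real.log (‖(r : ℂ) - z‖) ≤ x}
      = (ENNReal.ofReal π)⁻¹
          * volume (closedBall (r : ℂ) (Real.exp x) ∩ ball (0 : ℂ) 1) := by
  rw [unifDisc]
  simp only [Measure.smul_apply, smul_eq_mul, vol_ballC]
  congr 1
  rw [Measure.restrict_apply' measurableSet_ball]
  apply measure_congr
  rw [MeasureTheory.ae_eq_set]
  constructor
  · apply measure_mono_null (t := (∅ : Set ℂ)) _ measure_empty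
    rintro z ⟨⟨hz1, hz2⟩, hz3⟩
    exfalso
    apply hz3
    refine ⟨?_, hz2⟩
    show dist z (r : ℂ) ≤ Real.exp x
    rcases eq_or_ne z (r : ℂ) with h | h
    · simp [h, (Real.exp_pos x).le]
    · have hpos : 0 < ‖(r : ℂ) - z‖ := by
        rw [norm_pos_iff, sub_ne_zero]
        exact fun hh => h hh.symm
      have h2 := (Real.log_le_iff_le_exp hpos).mp hz1
      rwa [← Complex.dist_eq, dist_comm] at h2
  · apply measure_mono_null (t := {(r : ℂ)}) _ (measure_singleton _)
    rintro z ⟨⟨hz1, hz2⟩, hz3⟩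
    by_contra h
    apply hz3
    refine ⟨?_, hz2⟩
    have hpos : 0 < ‖(r : ℂ) - z‖ := by
      rw [norm_pos_iff, sub_ne_zero]
      exact fun hh => h hh.symm
    show Real.log (‖(r : ℂ) - z‖) ≤ x
    rw [Real.log_le_iff_le_exp hpos, ← Complex.dist_eq, dist_comm]
    exact Metric.mem_closedBall.mp hz1

private lemma volC_toReal (w : ℂ) {ρ : ℝ} (hρ : 0 ≤ ρ) :
    (volume (closedBall w ρ)).toReal = ρ ^ 2 * π := by
  rw [Complex.volume_closedBall, ENNReal.toReal_mul, ENNReal.toReal_pow,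
    ENNReal.toReal_ofReal hρ, ENNReal.coe_toReal, NNReal.coe_real_pi]

/-- For `X` uniform on the unit disc and `r ∈ [1/2, 1]`, the distribution function
`F_r(x) = P(log|r - X| ≤ x)` satisfies `F_r(x) = e^{2x}` for `x ≤ log(1-r)` (this condition
is written as `e^x ≤ 1 - r`, which is vacuous for `r = 1`), `F_r(x) = 1` for `x ≥ log 2`,
and `F_r` is Lipschitz with constant `4π`. -/
theorem cdf_log_abs_sub_uniform (r : ℝ) (hr0 : 1 / 2 ≤ r) (hr1 : r ≤ 1) :
    (∀ x : ℝ, Real.exp x ≤ 1 - r →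
        (unifDisc {z : ℂ | Real.log (‖(r : ℂ) - z‖) ≤ x}).toReal
          = Real.exp (2 * x)) ∧
    (∀ x : ℝ, Real.log 2 ≤ x →
        (unifDisc {z : ℂ | Real.log (‖(r : ℂ) - z‖) ≤ x}).toReal = 1) ∧
    (∀ x y : ℝ,
        |(unifDisc {z : ℂ | Real.log (‖(r : ℂ) - z‖) ≤ x}).toReal
            - (unifDisc {z : ℂ | Real.log (‖(r : ℂ) - z‖) ≤ y}).toReal|
          ≤ 4 * π * |x - y|) := by
  have hπ : (0 : ℝ) < π := Real.pi_pos
  have hdist0 : dist (0 : ℂ) (r : ℂ) = r := by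
    rw [Complex.dist_eq, zero_sub, norm_neg, Complex.norm_real, Real.norm_eq_abs,
      _root_.abs_of_nonneg (by linarith : (0:ℝ) ≤ r)]
  have hball : ∀ z : ℂ, z ∈ ball (0 : ℂ) 1 → dist z (r : ℂ) < 2 := by
    intro z hz
    have h0 := dist_triangle z (0 : ℂ) (r : ℂ)
    have hz1 : dist z 0 < 1 := mem_ball.mp hz
    rw [hdist0] at h0
    linarith
  have hF : ∀ x : ℝ, (unifDisc {z : ℂ | Real.log (‖(r : ℂ) - z‖) ≤ x}).toReal
      = π⁻¹ * (volume (closedBall (r : ℂ) (Real.exp x) ∩ ball (0 : ℂ) 1)).toReal := by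
    intro x
    rw [unif_apply, ENNReal.toReal_mul, ENNReal.toReal_inv, ENNReal.toReal_ofReal hπ.le]
  have hfin : ∀ s : Set ℂ, s ⊆ ball (0 : ℂ) 1 → volume s ≠ ⊤ := fun s hs =>
    ((measure_mono hs).trans_lt (by rw [vol_ballC]; exact ENNReal.ofReal_lt_top)).ne
  refine ⟨?_, ?_, ?_⟩
  · -- Part 1
    intro x hx
    rw [hF]
    have hsub : closedBall (r : ℂ) (Real.exp x) ⊆ closedBall (0 : ℂ) 1 := by
      apply closedBall_subset_closedBall'
      rw [dist_comm, hdist0]; linarith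
    have hZero : volume (closedBall (r : ℂ) (Real.exp x) \ ball (0 : ℂ) 1) = 0 := by
      apply measure_mono_null (t := sphere (0 : ℂ) 1) _ (Measure.addHaar_sphere volume 0 1)
      rintro z ⟨hz1, hz2⟩
      have h1 : dist z (0 : ℂ) ≤ 1 := mem_closedBall.mp (hsub hz1)
      have h2 : ¬ dist z (0 : ℂ) < 1 := fun h => hz2 (mem_ball.mpr h)
      exact mem_sphere.mpr (le_antisymm h1 (not_lt.mp h2))
    have hIB : volume (closedBall (r : ℂ) (Real.exp x) ∩ ball (0 : ℂ) 1)
        = volume (closedBall (r : ℂ) (Real.exp x)) := by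
      have h := measure_inter_add_diff (μ := volume) (t := ball (0 : ℂ) 1)
        (closedBall (r : ℂ) (Real.exp x)) measurableSet_ball
      rw [hZero, add_zero] at h
      exact h
    rw [hIB, volC_toReal _ (Real.exp_pos x).le, two_mul, Real.exp_add]
    field_simp
  · -- Part 2
    intro x hx
    have h2 : (2 : ℝ) ≤ Real.exp x := by
      rw [← Real.exp_log (by norm_num : (0:ℝ) < 2)]
      exact Real.exp_le_exp.mpr hx
    rw [hF]
    have hIB : closedBall (r : ℂ) (Real.exp x) ∩ ball (0 : ℂ) 1 = ball (0 : ℂ) 1 := by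
      rw [Set.inter_eq_right]
      intro z hz
      exact mem_closedBall.mpr ((hball z hz).le.trans h2)
    rw [hIB, vol_ballC, ENNReal.toReal_ofReal hπ.le]
    field_simp
  · -- Part 3
    have hcapset : ∀ t : ℝ, closedBall (r : ℂ) (Real.exp t) ∩ ball (0 : ℂ) 1
        = closedBall (r : ℂ) (min (Real.exp t) 2) ∩ ball (0 : ℂ) 1 := by
      intro t; ext z
      simp only [Set.mem_inter_iff, mem_closedBall, le_min_iff]
      constructor
      · rintro ⟨h1, h2⟩; exact ⟨⟨h1, (hball z h2).le⟩, h2⟩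
      · rintro ⟨⟨h1, _⟩, h2⟩; exact ⟨h1, h2⟩
    have mono : ∀ x y : ℝ, x ≤ y →
        (unifDisc {z : ℂ | Real.log (‖(r : ℂ) - z‖) ≤ x}).toReal
          ≤ (unifDisc {z : ℂ | Real.log (‖(r : ℂ) - z‖) ≤ y}).toReal := by
      intro x y hxy
      rw [hF, hF]
      apply mul_le_mul_of_nonneg_left _ (inv_nonneg.mpr hπ.le)
      apply ENNReal.toReal_mono (hfin _ Set.inter_subset_right)
      exact measure_mono (Set.inter_subset_inter_left _
        (closedBall_subset_closedBall (Real.exp_le_exp.mpr hxy)))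
    have lip : ∀ x y : ℝ, x ≤ y →
        (unifDisc {z : ℂ | Real.log (‖(r : ℂ) - z‖) ≤ y}).toReal
          - (unifDisc {z : ℂ | Real.log (‖(r : ℂ) - z‖) ≤ x}).toReal
          ≤ 8 * (y - x) := by
      intro x y hxy
      set ρ1 := min (Real.exp x) 2 with hρ1def
      set ρ2 := min (Real.exp y) 2 with hρ2def
      have hρ1pos : 0 < ρ1 := lt_min (Real.exp_pos x) two_pos
      have hρ12 : ρ1 ≤ ρ2 := min_le_min (Real.exp_le_exp.mpr hxy) le_rfl
      have hρ2le : ρ2 ≤ 2 := min_le_right _ _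
      have hstep : ρ2 - ρ1 ≤ 2 * (y - x) := by
        set a' := min x (Real.log 2) with ha'
        set b' := min y (Real.log 2) with hb'
        have e1 : ρ1 = Real.exp a' := by
          rw [ha', Real.exp_monotone.map_min, Real.exp_log (by norm_num : (0:ℝ) < 2)]
        have e2 : ρ2 = Real.exp b' := by
          rw [hb', Real.exp_monotone.map_min, Real.exp_log (by norm_num : (0:ℝ) < 2)]
        have hab : b' - a' ≤ y - x := by
          rw [ha', hb', min_def, min_def]
          split_ifs <;> linarith
        have hab2 : a' ≤ b' := min_le_min hxy le_rfl
        have heb : Real.exp b' ≤ 2 := by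
          rw [← Real.exp_log (by norm_num : (0:ℝ) < 2)]
          exact Real.exp_le_exp.mpr (min_le_right _ _)
        have hkey : Real.exp b' - Real.exp a' ≤ Real.exp b' * (b' - a') := by
          have h1 : a' - b' + 1 ≤ Real.exp (a' - b') := Real.add_one_le_exp _
          have h2 : Real.exp a' = Real.exp b' * Real.exp (a' - b') := by
            rw [← Real.exp_add]; ring_nf
          nlinarith [Real.exp_pos b']
        rw [e1, e2]
        nlinarith [Real.exp_pos b']
      rw [hF, hF, hcapset x, hcapset y, ← hρ1def, ← hρ2def]
      set A1 := closedBall (r : ℂ) ρ1 ∩ ball (0 : ℂ) 1 with hA1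
      set A2 := closedBall (r : ℂ) ρ2 ∩ ball (0 : ℂ) 1 with hA2
      have hCfin : volume (closedBall (r : ℂ) ρ2) ≠ ⊤ := measure_closedBall_lt_top.ne
      have hC1le : volume (closedBall (r : ℂ) ρ1) ≤ volume (closedBall (r : ℂ) ρ2) :=
        measure_mono (closedBall_subset_closedBall hρ12)
      have hdiff : volume (closedBall (r : ℂ) ρ2 \ closedBall (r : ℂ) ρ1)
          = volume (closedBall (r : ℂ) ρ2) - volume (closedBall (r : ℂ) ρ1) :=
        measure_diff (closedBall_subset_closedBall hρ12)
          measurableSet_closedBall.nullMeasurableSet measure_closedBall_lt_top.ne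
      have hle : volume A2 ≤ volume A1
          + volume (closedBall (r : ℂ) ρ2 \ closedBall (r : ℂ) ρ1) := by
        refine (measure_mono ?_).trans (measure_union_le _ _)
        rintro z ⟨hz1, hz2⟩
        by_cases h : z ∈ closedBall (r : ℂ) ρ1
        · exact Or.inl ⟨h, hz2⟩
        · exact Or.inr ⟨hz1, h⟩
      have hA1fin := hfin A1 Set.inter_subset_right
      have hA2fin := hfin A2 Set.inter_subset_right
      have hDfin : volume (closedBall (r : ℂ) ρ2 \ closedBall (r : ℂ) ρ1) ≠ ⊤ :=
        ne_top_of_le_ne_top hCfin (measure_mono Set.diff_subset)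
      have hreal : (volume A2).toReal ≤ (volume A1).toReal
          + (volume (closedBall (r : ℂ) ρ2 \ closedBall (r : ℂ) ρ1)).toReal := by
        rw [← ENNReal.toReal_add hA1fin hDfin]
        exact ENNReal.toReal_mono (ENNReal.add_ne_top.mpr ⟨hA1fin, hDfin⟩) hle
      have hDval : (volume (closedBall (r : ℂ) ρ2 \ closedBall (r : ℂ) ρ1)).toReal
          = ρ2 ^ 2 * π - ρ1 ^ 2 * π := by
        rw [hdiff, ENNReal.toReal_sub_of_le hC1le hCfin, volC_toReal _ (by linarith),
          volC_toReal _ hρ1pos.le]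
      rw [hDval] at hreal
      have h6 : ρ2 ^ 2 - ρ1 ^ 2 ≤ 8 * (y - x) := by nlinarith
      calc π⁻¹ * (volume A2).toReal - π⁻¹ * (volume A1).toReal
          = π⁻¹ * ((volume A2).toReal - (volume A1).toReal) := by ring
        _ ≤ π⁻¹ * ((ρ2 ^ 2 - ρ1 ^ 2) * π) := by
            apply mul_le_mul_of_nonneg_left _ (inv_nonneg.mpr hπ.le)
            linarith
        _ = ρ2 ^ 2 - ρ1 ^ 2 := by field_simp
        _ ≤ 8 * (y - x) := h6
    intro x y
    have h3 : (3 : ℝ) < π := Real.pi_gt_three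
    rcases le_total x y with h | h
    · rw [abs_of_nonpos (by linarith [mono x y h]), abs_of_nonpos (sub_nonpos.mpr h)]
      have := lip x y h
      nlinarith
    · rw [_root_.abs_of_nonneg (by linarith [mono y x h]), _root_.abs_of_nonneg (sub_nonneg.mpr h)]
      have := lip y x h
      nlinarith
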